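/- Let M be an additive submonoid of ℤ² that is rationally supported. If M is nearly atomic then M is atomic. -/

import Mathlib

/-- An element of ℤ² invertible within the submonoid M. -/
def IsUnitIn (M : AddSubmonoid (ℤ × ℤ)) (x : ℤ × ℤ) : Prop :=
  x ∈ M ∧ -x ∈ M

/-- An atom of the submonoid M of ℤ². -/
def IsAtomIn (M : AddSubmonoid (ℤ × ℤ)) (a : ℤ × ℤ) : Prop :=
  a ∈ M ∧ ¬ IsUnitIn M a ∧
    ∀ r s : ℤ × ℤ, r ∈ M → s ∈ M → a = r + s → IsUnitIn M r ∨ IsUnitIn M s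

/-- The submonoid generated by the atoms of M. -/
def AtomicElems (M : AddSubmonoid (ℤ × ℤ)) : AddSubmonoid (ℤ × ℤ) :=
  AddSubmonoid.closure {a : ℤ × ℤ | IsAtomIn M a}

/-- M is atomic: every non-invertible element is a sum of atoms. -/
def IsAtomicMonoid (M : AddSubmonoid (ℤ × ℤ)) : Prop :=
  ∀ x ∈ M, ¬ IsUnitIn M x → x ∈ AtomicElems M

/-- M is nearly atomic. -/
def IsNearlyAtomic (M : AddSubmonoid (ℤ × ℤ)) : Prop :=
  ∃ b ∈ M, ∀ m ∈ M, b + m ∈ AtomicElems M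

/-- M is rationally supported. -/
def RationallySupported (M : AddSubmonoid (ℤ × ℤ)) : Prop :=
  ∃ a b : ℤ, (a ≠ 0 ∨ b ≠ 0) ∧ ∀ x ∈ M, 0 ≤ a * x.1 + b * x.2

section Aux

lemma zero_isUnitIn (M : AddSubmonoid (ℤ × ℤ)) : IsUnitIn M 0 :=
  ⟨M.zero_mem, by simpa using M.zero_mem⟩

lemma atomicElems_le (M : AddSubmonoid (ℤ × ℤ)) : AtomicElems M ≤ M :=
  AddSubmonoid.closure_le.mpr fun _ ha => ha.1

lemma exists_decomp (M : AddSubmonoid (ℤ × ℤ)) {x : ℤ × ℤ} (hx : x ∈ M)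
    (hxu : ¬ IsUnitIn M x) (hat : ¬ IsAtomIn M x) :
    ∃ r s, r ∈ M ∧ s ∈ M ∧ x = r + s ∧ ¬ IsUnitIn M r ∧ ¬ IsUnitIn M s := by
  by_contra hcon
  push_neg at hcon
  refine hat ⟨hx, hxu, fun r s hr hs he => ?_⟩
  by_cases h : IsUnitIn M r
  · exact Or.inl h
  · exact Or.inr (hcon r s hr hs he h)

lemma caseA (M : AddSubmonoid (ℤ × ℤ)) (φ : (ℤ × ℤ) →+ ℤ)
    (hsup : ∀ x ∈ M, 0 ≤ φ x)
    (hall : ∀ z ∈ M, φ z = 0 → IsUnitIn M z) :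
    IsAtomicMonoid M := by
  have key : ∀ n : ℕ, ∀ x ∈ M, ¬ IsUnitIn M x → (φ x).toNat ≤ n → x ∈ AtomicElems M := by
    intro n
    induction n with
    | zero =>
      intro x hx hxu hn
      have h0 := hsup x hx
      exact absurd (hall x hx (by omega)) hxu
    | succ n ih =>
      intro x hx hxu hn
      by_cases hat : IsAtomIn M x
      · exact AddSubmonoid.subset_closure hat
      obtain ⟨r, s, hr, hs, he, hru, hsu⟩ := exists_decomp M hx hxu hat
      have hsum : φ x = φ r + φ s := by rw [he, map_add]
      have h1 : 0 ≤ φ r := hsup r hr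
      have h2 : 0 ≤ φ s := hsup s hs
      have h3 : φ r ≠ 0 := fun h => hru (hall r hr h)
      have h4 : φ s ≠ 0 := fun h => hsu (hall s hs h)
      have hra : r ∈ AtomicElems M := ih r hr hru (by omega)
      have hsa : s ∈ AtomicElems M := ih s hs hsu (by omega)
      rw [he]; exact add_mem hra hsa
  intro x hx hxu
  exact key (φ x).toNat x hx hxu le_rfl

lemma caseB (M : AddSubmonoid (ℤ × ℤ)) (φ ψ : (ℤ × ℤ) →+ ℤ) (w : ℤ × ℤ)
    (hker : ∀ z : ℤ × ℤ, φ z = 0 → z = (ψ z) • w)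
    (hsup : ∀ x ∈ M, 0 ≤ φ x)
    (hsign : ∀ z ∈ M, φ z = 0 → 0 ≤ ψ z)
    (y₀ : ℤ × ℤ) (hy₀M : y₀ ∈ M) (hy₀0 : φ y₀ = 0) (hy₀ne : y₀ ≠ 0)
    (hNA : IsNearlyAtomic M) :
    IsAtomicMonoid M := by
  obtain ⟨c, hc, hcA⟩ := hNA
  -- units are trivial
  have hunit : ∀ u, IsUnitIn M u → u = 0 := by
    intro u hu
    have h1 : 0 ≤ φ u := hsup u hu.1
    have h2 : 0 ≤ φ (-u) := hsup _ hu.2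
    rw [map_neg] at h2
    have hu0 : φ u = 0 := by omega
    have h3 : 0 ≤ ψ u := hsign u hu.1 hu0
    have h4 : 0 ≤ ψ (-u) := hsign _ hu.2 (by rw [map_neg]; omega)
    rw [map_neg] at h4
    have h5 : ψ u = 0 := by omega
    have h6 := hker u hu0
    rw [h5, zero_smul] at h6
    exact h6
  have hπpos : 0 < ψ y₀ := by
    rcases eq_or_lt_of_le (hsign y₀ hy₀M hy₀0) with h | h
    · exfalso
      apply hy₀ne
      have h6 := hker y₀ hy₀0
      rw [← h, zero_smul] at h6
      exact h6
    · exact h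
  -- nonzero level-0 elements have ψ ≥ 1
  have lev : ∀ z ∈ M, ¬ IsUnitIn M z → φ z = 0 → 1 ≤ ψ z := by
    intro z hz hzu hz0
    have h0 := hsign z hz hz0
    rcases eq_or_lt_of_le h0 with h | h
    · exfalso
      apply hzu
      have h6 := hker z hz0
      rw [← h, zero_smul] at h6
      rw [h6]
      exact zero_isUnitIn M
    · omega
  -- rigidity of atoms: two atoms at the same positive level can't differ by a
  -- positive multiple of ψ y₀ in the ψ coordinate
  have hrig : ∀ α β t, IsAtomIn M α → IsAtomIn M β → φ α = φ β →
      ψ α - ψ β = ψ y₀ * t → 0 < t → False := by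
    intro α β t hα hβ hφeq ht htpos
    have hδ : φ (α - β) = 0 := by rw [map_sub]; omega
    have hδw : α - β = (ψ (α - β)) • w := hker _ hδ
    have hy₀w : y₀ = (ψ y₀) • w := hker _ hy₀0
    have hδy : α - β = t • y₀ := by
      rw [hδw, map_sub, ht, mul_comm, mul_smul]
      exact congrArg (fun q => t • q) hy₀w.symm
    have htn : t • y₀ = t.toNat • y₀ := by
      rw [← natCast_zsmul]
      congr 1
      omega
    have hmem : t • y₀ ∈ M := by
      rw [htn]; exact M.nsmul_mem hy₀M _
    have hne : ¬ IsUnitIn M (t • y₀) := by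
      intro h0
      have h1 := hunit _ h0
      have h2 : ψ (t • y₀) = 0 := by rw [h1, map_zero]
      rw [map_zsmul, smul_eq_mul] at h2
      nlinarith
    have heq : α = β + t • y₀ := by
      rw [← hδy]; abel
    rcases hα.2.2 β (t • y₀) hβ.1 hmem heq with h | h
    · exact hβ.2.1 h
    · exact hne h
  -- key induction step
  have key : ∀ n : ℕ, (∀ x ∈ M, ¬ IsUnitIn M x → (φ x).toNat < n → x ∈ AtomicElems M) →
      ∀ x ∈ M, ¬ IsUnitIn M x → (φ x).toNat ≤ n → x ∈ AtomicElems M := by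
    intro n hlow
    -- the set of ψ-values of atoms with positive level ≤ H := φ c + n is finite
    set H : ℤ := φ c + n with hH
    set π : ℕ := (ψ y₀).toNat with hπ
    haveI : NeZero π := ⟨by omega⟩
    have hTv : ∀ v : ℤ, Set.Finite {k : ℤ | ∃ α, IsAtomIn M α ∧ φ α = v ∧ ψ α = k} := by
      intro v
      apply Set.Finite.of_finite_image (f := fun k : ℤ => (k : ZMod π)) (Set.toFinite _)
      intro k₁ hk₁ k₂ hk₂ hkk
      obtain ⟨α, hα, hαv, hαk⟩ := hk₁
      obtain ⟨β, hβ, hβv, hβk⟩ := hk₂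
      by_contra hne
      have hdvd : (π : ℤ) ∣ k₂ - k₁ := Int.ModEq.dvd ((ZMod.intCast_eq_intCast_iff _ _ _).mp hkk)
      obtain ⟨t, ht⟩ := hdvd
      have hπc : (π : ℤ) = ψ y₀ := by omega
      rcases lt_trichotomy k₁ k₂ with h | h | h
      · refine hrig β α t hβ hα (by omega) ?_ ?_
        · rw [hβk, hαk, ht, hπc]
        · by_contra hle
          push_neg at hle
          have h0 : (π:ℤ) * t ≤ (π:ℤ) * 0 := by
            apply mul_le_mul_of_nonneg_left hle
            positivity
          rw [mul_zero] at h0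
          omega
      · exact hne h
      · refine hrig α β (-t) hα hβ (by omega) ?_ ?_
        · rw [hαk, hβk, ← hπc]
          linear_combination -ht
        · by_contra hle
          push_neg at hle
          have h0 : (π:ℤ) * 0 ≤ (π:ℤ) * t := by
            apply mul_le_mul_of_nonneg_left (by omega)
            positivity
          rw [mul_zero] at h0
          omega
    have hT : Set.Finite {k : ℤ | ∃ α, IsAtomIn M α ∧ 0 < φ α ∧ φ α ≤ H ∧ ψ α = k} := by
      apply Set.Finite.subset ((Set.finite_Icc (1:ℤ) H).biUnion
        (fun v _ => hTv v))
      rintro k ⟨α, hα, h1, h2, h3⟩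
      exact Set.mem_biUnion (Set.mem_Icc.mpr ⟨by omega, h2⟩) ⟨α, hα, rfl, h3⟩
    obtain ⟨L, hL⟩ := hT.bddBelow
    set L0 : ℤ := min L 0 with hL0
    have hL0le : L0 ≤ 0 := min_le_right _ _
    -- lower bound for ψ on atomic elements of level ≤ H
    have Abound : ∀ m : ℤ × ℤ, m ∈ AtomicElems M → φ m ≤ H → L0 * φ m ≤ ψ m := by
      intro m hm
      induction hm using AddSubmonoid.closure_induction with
      | mem α hα =>
        intro hαH
        have hαM : α ∈ M := hα.1
        have h0 := hsup α hαM
        rcases eq_or_lt_of_le h0 with h | h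
        · have := hsign α hαM h.symm
          nlinarith
        · have hmemT : ψ α ∈ {k : ℤ | ∃ α, IsAtomIn M α ∧ 0 < φ α ∧ φ α ≤ H ∧ ψ α = k} :=
            ⟨α, hα, h, hαH, rfl⟩
          have := hL hmemT
          have h1 : L0 ≤ L := min_le_left _ _
          nlinarith
      | zero =>
        intro _
        simp
      | add x y hx hy ihx ihy =>
        intro hxyH
        have hxM : x ∈ M := atomicElems_le M hx
        have hyM : y ∈ M := atomicElems_le M hy
        have h1 := hsup x hxM
        have h2 := hsup y hyM
        rw [map_add] at hxyH ⊢
        rw [map_add]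
        have i1 := ihx (by omega)
        have i2 := ihy (by omega)
        nlinarith
    -- lower bound for ψ on elements of M of level ≤ n
    set B : ℤ := L0 * (φ c + n) - ψ c with hB
    have slice : ∀ m ∈ M, φ m ≤ (n : ℤ) → B ≤ ψ m := by
      intro m hm hmn
      have h1 := hcA m hm
      have h2 : φ (c + m) ≤ H := by rw [map_add]; omega
      have h3 := Abound _ h1 h2
      rw [map_add, map_add] at h3
      have h4 := hsup m hm
      have h5 := hsup c hc
      nlinarith
    have inner : ∀ k : ℕ, ∀ x ∈ M, ¬ IsUnitIn M x → (φ x).toNat ≤ n →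
        (ψ x - B).toNat < k → x ∈ AtomicElems M := by
      intro k
      induction k with
      | zero => intro x _ _ _ h; omega
      | succ k ih =>
        intro x hx hxu hxn hxk
        by_cases hat : IsAtomIn M x
        · exact AddSubmonoid.subset_closure hat
        obtain ⟨r, s, hr, hs, he, hru, hsu⟩ := exists_decomp M hx hxu hat
        have hsum : φ x = φ r + φ s := by rw [he, map_add]
        have hψsum : ψ x = ψ r + ψ s := by rw [he, map_add]
        have hφr := hsup r hr
        have hφs := hsup s hs
        have hφx := hsup x hx
        have hxlb := slice x hx (by omega)
        by_cases h1 : φ r = 0 <;> by_cases h2 : φ s = 0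
        · have hr1 := lev r hr hru h1
          have hs1 := lev s hs hsu h2
          have hrB := slice r hr (by omega)
          have hsB := slice s hs (by omega)
          have hra := ih r hr hru (by omega) (by omega)
          have hsa := ih s hs hsu (by omega) (by omega)
          rw [he]; exact add_mem hra hsa
        · have hr1 := lev r hr hru h1
          have hra := hlow r hr hru (by omega)
          have hsB := slice s hs (by omega)
          have hsa := ih s hs hsu (by omega) (by omega)
          rw [he]; exact add_mem hra hsa
        · have hs1 := lev s hs hsu h2
          have hsa := hlow s hs hsu (by omega)
          have hrB := slice r hr (by omega)
          have hra := ih r hr hru (by omega) (by omega)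
          rw [he]; exact add_mem hra hsa
        · have hra := hlow r hr hru (by omega)
          have hsa := hlow s hs hsu (by omega)
          rw [he]; exact add_mem hra hsa
    intro x hx hxu hxn
    have hxlb := slice x hx (by omega)
    exact inner ((ψ x - B).toNat + 1) x hx hxu hxn (by omega)
  have main : ∀ n : ℕ, ∀ x ∈ M, ¬ IsUnitIn M x → (φ x).toNat ≤ n → x ∈ AtomicElems M := by
    intro n
    induction n with
    | zero => exact key 0 (by intro x _ _ h; omega)
    | succ n ih => exact key (n + 1) (fun x hx hu h => ih x hx hu (by omega))
  intro x hx hxu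
  exact main (φ x).toNat x hx hxu le_rfl

end Aux

/-- A rationally supported nearly atomic submonoid of ℤ² is atomic. -/
theorem rationally_supported_nearly_atomic_implies_atomic
    (M : AddSubmonoid (ℤ × ℤ)) (hM : RationallySupported M)
    (hNA : IsNearlyAtomic M) :
    IsAtomicMonoid M := by
  obtain ⟨a, b, hab, hsup0⟩ := hM
  set g : ℤ := (Int.gcd a b : ℤ) with hgdef
  have hgpos : 0 < g := by
    have := Int.gcd_pos_iff.mpr hab
    omega
  set u : ℤ := Int.gcdA a b with hu
  set v : ℤ := Int.gcdB a b with hv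
  have hbez : g = a * u + b * v := Int.gcd_eq_gcd_ab a b
  obtain ⟨a', haa⟩ : g ∣ a := Int.gcd_dvd_left a b
  obtain ⟨b', hbb⟩ : g ∣ b := Int.gcd_dvd_right a b
  have hbez' : a' * u + b' * v = 1 := by
    have h : g * (a' * u + b' * v) = g * 1 := by
      linear_combination (-u) * haa + (-v) * hbb - hbez
    exact mul_left_cancel₀ (by omega) h
  set φ : (ℤ × ℤ) →+ ℤ := AddMonoidHom.mk' (fun x => a * x.1 + b * x.2)
    (by intro x y; simp [Prod.fst_add, Prod.snd_add]; ring) with hφdef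
  set ψ : (ℤ × ℤ) →+ ℤ := AddMonoidHom.mk' (fun x => -v * x.1 + u * x.2)
    (by intro x y; simp [Prod.fst_add, Prod.snd_add]; ring) with hψdef
  set w : ℤ × ℤ := (-b', a') with hw
  have hφ_apply : ∀ z : ℤ × ℤ, φ z = a * z.1 + b * z.2 := fun z => rfl
  have hψ_apply : ∀ z : ℤ × ℤ, ψ z = -v * z.1 + u * z.2 := fun z => rfl
  have hsup : ∀ x ∈ M, 0 ≤ φ x := by
    intro x hx; rw [hφ_apply]; exact hsup0 x hx
  have hker : ∀ z : ℤ × ℤ, φ z = 0 → z = (ψ z) • w := by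
    intro z hz
    rw [hφ_apply] at hz
    have hz' : a' * z.1 + b' * z.2 = 0 := by
      have h : g * (a' * z.1 + b' * z.2) = 0 := by
        rw [haa, hbb] at hz; linear_combination hz
      have hg : g ≠ 0 := by omega
      exact (mul_eq_zero.mp h).resolve_left hg
    have h1 : (ψ z • w).1 = ψ z * (-b') := rfl
    have h2 : (ψ z • w).2 = ψ z * a' := rfl
    have e1 : z.1 = ψ z * (-b') := by
      rw [hψ_apply]
      linear_combination (-z.1) * hbez' + u * hz'
    have e2 : z.2 = ψ z * a' := by
      rw [hψ_apply]
      linear_combination (-z.2) * hbez' + v * hz'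
    exact Prod.ext (by rw [h1, ← e1]) (by rw [h2, ← e2])
  by_cases hall : ∀ z ∈ M, φ z = 0 → IsUnitIn M z
  · exact caseA M φ hsup hall
  push_neg at hall
  obtain ⟨y₀, hy₀M, hy₀0, hy₀u⟩ := hall
  have hy₀ne : y₀ ≠ 0 := fun h => hy₀u (h ▸ zero_isUnitIn M)
  -- the level-0 part is one-signed w.r.t. ψ
  have hmix : (∀ z ∈ M, φ z = 0 → 0 ≤ ψ z) ∨ (∀ z ∈ M, φ z = 0 → ψ z ≤ 0) := by
    by_contra hcon
    push_neg at hcon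
    obtain ⟨⟨z, hz, hz0, hzneg⟩, ⟨z', hz', hz'0, hz'pos⟩⟩ := hcon
    -- then every level-0 element is invertible; contradiction with y₀
    have grp : ∀ s ∈ M, φ s = 0 → -s ∈ M := by
      intro s hs hs0
      have hsψ := hker s hs0
      have hzψ := hker z hz0
      have hz'ψ := hker z' hz'0
      rcases le_or_gt 0 (ψ s) with hσ | hσ
      · set e : ℤ × ℤ := (-(ψ z) - 1).toNat • s + (ψ s).toNat • z with he
        have heM : e ∈ M := add_mem (M.nsmul_mem hs _) (M.nsmul_mem hz _)
        have he0 : φ e = 0 := by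
          rw [he, map_add, map_nsmul, map_nsmul, hs0, hz0]; simp
        have heψ : ψ e = -(ψ s) := by
          rw [he, map_add, map_nsmul, map_nsmul, nsmul_eq_mul, nsmul_eq_mul]
          have c1 : ((-(ψ z) - 1).toNat : ℤ) = -(ψ z) - 1 := by omega
          have c2 : (((ψ s).toNat : ℤ)) = ψ s := by omega
          rw [c1, c2]; ring
        have hes : e = -s := by
          have h1 := hker e he0
          have h2 : φ (-s) = 0 := by rw [map_neg, hs0, neg_zero]
          have h3 := hker (-s) h2
          rw [map_neg] at h3
          rw [h1, heψ, h3]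
        rw [← hes]; exact heM
      · set e : ℤ × ℤ := (ψ z' - 1).toNat • s + (-(ψ s)).toNat • z' with he
        have heM : e ∈ M := add_mem (M.nsmul_mem hs _) (M.nsmul_mem hz' _)
        have he0 : φ e = 0 := by
          rw [he, map_add, map_nsmul, map_nsmul, hs0, hz'0]; simp
        have heψ : ψ e = -(ψ s) := by
          rw [he, map_add, map_nsmul, map_nsmul, nsmul_eq_mul, nsmul_eq_mul]
          have c1 : ((ψ z' - 1).toNat : ℤ) = ψ z' - 1 := by omega
          have c2 : ((-(ψ s)).toNat : ℤ) = -(ψ s) := by omega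
          rw [c1, c2]; ring
        have hes : e = -s := by
          have h1 := hker e he0
          have h2 : φ (-s) = 0 := by rw [map_neg, hs0, neg_zero]
          have h3 := hker (-s) h2
          rw [map_neg] at h3
          rw [h1, heψ, h3]
        rw [← hes]; exact heM
    exact hy₀u ⟨hy₀M, grp y₀ hy₀M hy₀0⟩
  rcases hmix with hsign | hsign
  · exact caseB M φ ψ w hker hsup hsign y₀ hy₀M hy₀0 hy₀ne hNA
  · refine caseB M φ (-ψ) (-w) ?_ hsup ?_ y₀ hy₀M hy₀0 hy₀ne hNA
    · intro z hz
      have := hker z hz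
      simp only [AddMonoidHom.neg_apply]
      rw [neg_smul_neg]
      exact this
    · intro z hz h0
      simp only [AddMonoidHom.neg_apply]
      have := hsign z hz h0
      omega
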